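/- Almost independence (Corollary 3): Let X be a finite alphabet, n ∈ ℕ, P an n-type on X, 1 ≤ i ≤ n−1, δ ≥ 0, and let X^n be uniformly distributed on T_n(P). Let x^i ∈ X^i be a prefix of positive probability under the law of (X_1,…,X_i), and let Q* be its associated suffix type, Q*(a) = (n·P(a) − i·P̂_{x^i}(a))/(n−i). If |Q*(a) − P(a)| ≤ δ·P(a) for all a ∈ X, then |P{X_{i+1} = a | (X_1,…,X_i) = x^i} − P(a)| ≤ δ·P(a) for all a ∈ X. -/

import Mathlib

open scoped BigOperators Classical

noncomputable section

/-- A probability mass function on a finite alphabet. -/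
def IsPMF {X : Type*} [Fintype X] (p : X → ℝ) : Prop :=
  (∀ a, 0 ≤ p a) ∧ ∑ a, p a = 1

/-- A (discrete memoryless) channel from `X` to `Y`: every row is a pmf. -/
def IsChannel {X Y : Type*} [Fintype X] [Fintype Y] (W : X → Y → ℝ) : Prop :=
  ∀ x, IsPMF (W x)

/-- Empirical distribution (type) of a sequence `x : Fin n → X`. -/
def empDist {X : Type*} [Fintype X] {n : ℕ} (x : Fin n → X) (a : X) : ℝ :=
  ((Finset.univ.filter fun t => x t = a).card : ℝ) / n

/-- `P` is an `n`-type on `X`: a pmf all of whose masses are multiples of `1/n`. -/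
def IsNType {X : Type*} [Fintype X] (n : ℕ) (P : X → ℝ) : Prop :=
  IsPMF P ∧ ∀ a, ∃ k : ℕ, (n : ℝ) * P a = k

/-- The type class `T_n(P)`: all sequences with empirical distribution `P`. -/
def typeClass {X : Type*} [Fintype X] (n : ℕ) (P : X → ℝ) : Finset (Fin n → X) :=
  Finset.univ.filter fun x => empDist x = P

/-- Shannon entropy (natural logarithm). -/
def shEntropy {X : Type*} [Fintype X] (p : X → ℝ) : ℝ :=
  ∑ a, Real.negMulLog (p a)

/-- Kullback–Leibler divergence (real-valued, with the usual `log` conventions). -/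
def dKL {X : Type*} [Fintype X] (q p : X → ℝ) : ℝ :=
  ∑ a, q a * Real.log (q a / p a)

/-- Conditional KL divergence `D(V‖W|P)`. -/
def condDKL {X Y : Type*} [Fintype X] [Fintype Y] (V W : X → Y → ℝ) (P : X → ℝ) : ℝ :=
  ∑ x, P x * dKL (V x) (W x)

def margFst {X Y : Type*} [Fintype X] [Fintype Y] (Q : X × Y → ℝ) (x : X) : ℝ :=
  ∑ y, Q (x, y)

def margSnd {X Y : Type*} [Fintype X] [Fintype Y] (Q : X × Y → ℝ) (y : Y) : ℝ :=
  ∑ x, Q (x, y)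

/-- Mutual information of a joint pmf (natural logarithm). -/
def mutualInfo {X Y : Type*} [Fintype X] [Fintype Y] (Q : X × Y → ℝ) : ℝ :=
  ∑ x, ∑ y, Q (x, y) * Real.log (Q (x, y) / (margFst Q x * margSnd Q y))

/-- Mutual information `I(P, V)` of the joint pmf `P(x)·V(y|x)`. -/
def miPV {X Y : Type*} [Fintype X] [Fintype Y] (P : X → ℝ) (V : X → Y → ℝ) : ℝ :=
  mutualInfo fun p => P p.1 * V p.1 p.2

/-- Positive part `|a|⁺ = max (a, 0)`. -/
def plusPart (a : ℝ) : ℝ := max a 0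

def margXY {X Y U : Type*} [Fintype X] [Fintype Y] [Fintype U] (Q : X × Y × U → ℝ) :
    X × Y → ℝ := fun p => ∑ u, Q (p.1, p.2, u)

def margYU {X Y U : Type*} [Fintype X] [Fintype Y] [Fintype U] (Q : X × Y × U → ℝ) :
    Y × U → ℝ := fun p => ∑ x, Q (x, p.1, p.2)

def margXU {X Y U : Type*} [Fintype X] [Fintype Y] [Fintype U] (Q : X × Y × U → ℝ) :
    X × U → ℝ := fun p => ∑ y, Q (p.1, y, p.2)

def margX3 {X Y U : Type*} [Fintype X] [Fintype Y] [Fintype U] (Q : X × Y × U → ℝ)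
    (x : X) : ℝ := ∑ y, ∑ u, Q (x, y, u)

def margY3 {X Y U : Type*} [Fintype X] [Fintype Y] [Fintype U] (Q : X × Y × U → ℝ)
    (y : Y) : ℝ := ∑ x, ∑ u, Q (x, y, u)

/-- Conditional mutual information `I_Q(X;U|Y)` of a joint pmf `Q` on `X × Y × U`. -/
def condMI3 {X Y U : Type*} [Fintype X] [Fintype Y] [Fintype U] (Q : X × Y × U → ℝ) : ℝ :=
  ∑ x, ∑ y, ∑ u, Q (x, y, u) *
    Real.log (Q (x, y, u) * margY3 Q y / (margXY Q (x, y) * margYU Q (y, u)))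

/-- `D(Q_{Y|X} ‖ W | P)` written via the joint pmf `Q_{XY}` (whose `X`-marginal is `P`). -/
def condDKLJoint {X Y : Type*} [Fintype X] [Fintype Y] (QXY : X × Y → ℝ)
    (W : X → Y → ℝ) (P : X → ℝ) : ℝ :=
  ∑ x, ∑ y, QXY (x, y) * Real.log (QXY (x, y) / (P x * W x y))

/-- Number of messages `M_n = ⌈exp (n R)⌉`. -/
def Mn (R : ℝ) (n : ℕ) : ℕ := ⌈Real.exp (n * R)⌉₊

/-- All codebooks of `M` codewords, each of constant composition `P`. -/
def ccCodebooks {X : Type*} [Fintype X] (n M : ℕ) (P : X → ℝ) :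
    Finset (Fin M → Fin n → X) :=
  Finset.univ.filter fun C => ∀ m, C m ∈ typeClass n P

/-- Ensemble-average decoding error probability of an `(n,R,B)`-code for the IB channel:
the expectation, over a codebook drawn uniformly from the constant composition ensemble of
type `P`, of the average over messages `m` of the probability (under the memoryless channel
`W`) that the decoder output differs from `m` when codeword `C m` is sent. -/
def avgError {X Y L : Type*} [Fintype X] [Fintype Y] (W : X → Y → ℝ) (n M : ℕ)
    (P : X → ℝ) (φ : (Fin n → Y) → L) (ψ : L → (Fin M → Fin n → X) → Fin M) : ℝ :=
  (∑ C ∈ ccCodebooks n M P, (M : ℝ)⁻¹ * ∑ m : Fin M, ∑ y : Fin n → Y,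
      if ψ (φ y) C = m then 0 else ∏ t, W (C m t) (y t)) /
    ((ccCodebooks n M P).card : ℝ)


lemma empDist_comp_perm {X : Type*} [Fintype X] {n : ℕ} (x : Fin n → X)
    (σ : Equiv.Perm (Fin n)) : empDist (x ∘ σ) = empDist x := by
  funext a
  unfold empDist
  congr 2
  apply Finset.card_nbij' (fun t => σ t) (fun t => σ.symm t)
  · intro t ht
    simp only [Finset.mem_coe, Finset.mem_filter, Finset.mem_univ, true_and, Function.comp] at ht ⊢
    exact ht
  · intro t ht
    simp only [Finset.mem_coe, Finset.mem_filter, Finset.mem_univ, true_and, Function.comp] at ht ⊢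
    simpa using ht
  · intro t _; simp
  · intro t _; simp

/-- **Corollary 3** (almost independence): let `X^n` be uniform on `T_n(P)`, `1 ≤ i ≤ n−1`,
and let `x^i` be a prefix of positive probability with associated suffix type
`Q*(a) = (n·P(a) − i·P̂_{x^i}(a))/(n−i)`. If `|Q*(a) − P(a)| ≤ δ·P(a)` for all `a`, then the
conditional law of the next coordinate given the prefix satisfies
`|P{X_{i+1} = a | prefix} − P(a)| ≤ δ·P(a)` for all `a`. -/
theorem constant_composition_almost_independent
    {X : Type*} [Fintype X] (n i : ℕ) (hi1 : 1 ≤ i) (hin : i < n)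
    (P : X → ℝ) (hP : IsNType n P) (δ : ℝ) (hδ : 0 ≤ δ) (xp : Fin i → X)
    (hpos : 0 < ((typeClass n P).filter fun x =>
        ∀ t : Fin i, x (Fin.castLE hin.le t) = xp t).card)
    (hQ : ∀ a : X,
      |((n : ℝ) * P a - (i : ℝ) * empDist xp a) / ((n - i : ℕ) : ℝ) - P a| ≤ δ * P a) :
    ∀ a : X,
      |((((typeClass n P).filter fun x =>
            (∀ t : Fin i, x (Fin.castLE hin.le t) = xp t) ∧ x ⟨i, hin⟩ = a).card : ℝ) /
          (((typeClass n P).filter fun x =>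
            ∀ t : Fin i, x (Fin.castLE hin.le t) = xp t).card : ℝ)) - P a| ≤ δ * P a := by
  intro a
  classical
  set ii : Fin n := ⟨i, hin⟩ with hii
  set S : Finset (Fin n → X) := (typeClass n P).filter
      (fun x => ∀ t : Fin i, x (Fin.castLE hin.le t) = xp t) with hSdef
  obtain ⟨k, hk⟩ := hP.2 a
  set c : ℕ := (Finset.univ.filter fun t : Fin i => xp t = a).card with hc
  have hn0 : 0 < n := lt_of_le_of_lt (Nat.zero_le i) hin
  -- total count of a's in any sequence of the type class is k
  have htot : ∀ x ∈ typeClass n P,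
      (Finset.univ.filter fun t : Fin n => x t = a).card = k := by
    intro x hx
    have hxP : empDist x = P := by
      simpa [typeClass] using hx
    have h2 : ((Finset.univ.filter fun t : Fin n => x t = a).card : ℝ) / n = P a := by
      rw [← hxP]; rfl
    have h3 : ((Finset.univ.filter fun t : Fin n => x t = a).card : ℝ) = k := by
      rw [← hk]
      field_simp at h2
      linarith
    exact_mod_cast h3
  -- prefix count of a's is c
  have hpre : ∀ x ∈ S,
      ((Finset.univ.filter fun j : Fin n => x j = a).filter
        fun j : Fin n => (j : ℕ) < i).card = c := by
    intro x hx
    have hxp : ∀ t : Fin i, x (Fin.castLE hin.le t) = xp t := (Finset.mem_filter.mp hx).2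
    rw [hc]
    apply Finset.card_nbij' (fun j => ⟨(j : ℕ) % i, Nat.mod_lt _ (by omega)⟩)
      (fun t => Fin.castLE hin.le t)
    · intro j hj
      simp only [Finset.mem_coe, Finset.mem_filter, Finset.mem_univ, true_and] at hj ⊢
      obtain ⟨hja, hjlt⟩ := hj
      have hm : (j : ℕ) % i = (j : ℕ) := Nat.mod_eq_of_lt hjlt
      have hcast : Fin.castLE hin.le (⟨(j : ℕ) % i, Nat.mod_lt _ (by omega)⟩ : Fin i) = j := by
        apply Fin.ext; simp [hm]
      rw [← hxp ⟨(j : ℕ) % i, Nat.mod_lt _ (by omega)⟩, hcast]; exact hja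
    · intro t ht
      simp only [Finset.mem_coe, Finset.mem_filter, Finset.mem_univ, true_and] at ht ⊢
      exact ⟨by rw [hxp t]; exact ht, by simp⟩
    · intro j hj
      simp only [Finset.mem_coe, Finset.mem_filter, Finset.mem_univ, true_and] at hj
      apply Fin.ext
      simp [Nat.mod_eq_of_lt hj.2]
    · intro t _
      apply Fin.ext
      simp [Nat.mod_eq_of_lt t.isLt]
  -- the set of suffix positions
  set F : Finset (Fin n) := Finset.univ.filter (fun j : Fin n => ¬ (j : ℕ) < i) with hF
  have hFi : (Finset.univ.filter fun j : Fin n => (j : ℕ) < i) = Finset.Iio ii := by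
    ext j; simp [Fin.lt_def, hii]
  have hFcard : F.card = n - i := by
    have h1 := Finset.card_filter_add_card_filter_not
      (s := (Finset.univ : Finset (Fin n))) (p := fun j : Fin n => (j : ℕ) < i)
    rw [hFi, Fin.card_Iio, ← hF] at h1
    have hiv : (ii : ℕ) = i := rfl
    rw [hiv] at h1
    simp only [Finset.card_univ, Fintype.card_fin] at h1
    omega
  -- suffix count of a's is k - c
  have hsuf : ∀ x ∈ S, (F.filter fun j => x j = a).card = k - c := by
    intro x hx
    have h1 := Finset.card_filter_add_card_filter_not
      (s := Finset.univ.filter fun j : Fin n => x j = a) (p := fun j : Fin n => (j : ℕ) < i)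
    rw [htot x (Finset.mem_filter.mp hx).1, hpre x hx] at h1
    have h2 : ((Finset.univ.filter fun j : Fin n => x j = a).filter
        fun j : Fin n => ¬ (j : ℕ) < i) = F.filter fun j => x j = a := by
      ext j; simp [hF]; tauto
    rw [h2] at h1
    omega
  have hck : c ≤ k := by
    obtain ⟨x, hx⟩ := Finset.card_pos.mp hpos
    have h1 := Finset.card_filter_add_card_filter_not
      (s := Finset.univ.filter fun j : Fin n => x j = a) (p := fun j : Fin n => (j : ℕ) < i)
    rw [htot x (Finset.mem_filter.mp hx).1, hpre x hx] at h1
    omega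
  -- swap symmetry
  have hswap : ∀ j ∈ F, (S.filter fun x => x j = a).card = (S.filter fun x => x ii = a).card := by
    intro j hj
    have hij : i ≤ (j : ℕ) := by simpa [hF] using hj
    have key : ∀ x, x ∈ S → (x ∘ Equiv.swap ii j) ∈ S := by
      intro x hx
      obtain ⟨hx1, hx2⟩ := Finset.mem_filter.mp hx
      refine Finset.mem_filter.mpr ⟨?_, ?_⟩
      · simp only [typeClass, Finset.mem_filter, Finset.mem_univ, true_and] at hx1 ⊢
        rw [empDist_comp_perm, hx1]
      · intro t
        have h1 : Fin.castLE hin.le t ≠ ii := by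
          intro h; have := congrArg Fin.val h
          simp [hii] at this; omega
        have h2 : Fin.castLE hin.le t ≠ j := by
          intro h; have := congrArg Fin.val h
          simp at this; omega
        simpa [Function.comp, Equiv.swap_apply_of_ne_of_ne h1 h2] using hx2 t
    apply Finset.card_nbij' (fun x => x ∘ Equiv.swap ii j) (fun x => x ∘ Equiv.swap ii j)
    · intro x hx
      obtain ⟨hxS, hxa⟩ := Finset.mem_filter.mp hx
      exact Finset.mem_filter.mpr ⟨key x hxS, by simp [Function.comp, Equiv.swap_apply_left, hxa]⟩
    · intro x hx
      obtain ⟨hxS, hxa⟩ := Finset.mem_filter.mp hx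
      exact Finset.mem_filter.mpr ⟨key x hxS, by simp [Function.comp, Equiv.swap_apply_right, hxa]⟩
    · intro x _; funext t; simp [Function.comp]
    · intro x _; funext t; simp [Function.comp]
  -- double counting
  have hdc : ∑ j ∈ F, (S.filter fun x => x j = a).card
      = ∑ x ∈ S, (F.filter fun j => x j = a).card := by
    simp_rw [Finset.card_filter]
    rw [Finset.sum_comm]
  have hLHS : ∑ j ∈ F, (S.filter fun x => x j = a).card
      = (n - i) * (S.filter fun x => x ii = a).card := by
    rw [Finset.sum_congr rfl hswap, Finset.sum_const, hFcard, smul_eq_mul]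
  have hRHS : ∑ x ∈ S, (F.filter fun j => x j = a).card = S.card * (k - c) := by
    rw [Finset.sum_congr rfl hsuf, Finset.sum_const, smul_eq_mul]
  have hmain : (n - i) * (S.filter fun x => x ii = a).card = S.card * (k - c) := by
    rw [← hLHS, hdc, hRHS]
  -- pass to reals
  have hSne : (0 : ℝ) < (S.card : ℝ) := by exact_mod_cast hpos
  have hni : (0 : ℝ) < ((n - i : ℕ) : ℝ) := by
    exact_mod_cast Nat.sub_pos_of_lt hin
  have hmainR : ((n - i : ℕ) : ℝ) * ((S.filter fun x => x ii = a).card : ℝ)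
      = (S.card : ℝ) * ((k : ℝ) - (c : ℝ)) := by
    have := congrArg (fun m : ℕ => (m : ℝ)) hmain
    push_cast [Nat.cast_sub hck] at this
    push_cast [Nat.cast_sub hck]
    linarith
  have hratio : ((S.filter fun x => x ii = a).card : ℝ) / (S.card : ℝ)
      = ((k : ℝ) - (c : ℝ)) / ((n - i : ℕ) : ℝ) := by
    field_simp
    linarith [hmainR]
  -- identify Q* with (k - c)/(n - i)
  have hemp : (i : ℝ) * empDist xp a = (c : ℝ) := by
    have hi0 : (0 : ℝ) < (i : ℝ) := by exact_mod_cast hi1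
    rw [empDist, hc]
    field_simp
  have hQa := hQ a
  rw [hk, hemp] at hQa
  have hfilter : ((typeClass n P).filter fun x =>
      (∀ t : Fin i, x (Fin.castLE hin.le t) = xp t) ∧ x ⟨i, hin⟩ = a)
      = S.filter fun x => x ii = a := by
    rw [hSdef, Finset.filter_filter]
  rw [hfilter, hratio]
  exact hQa

end
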